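/- Let A ∈ ℝ^{n×n} be symmetric, let X ⊆ {{i,j} : 1 ≤ i < j ≤ n}, let r ∈ {1,…,n}, let X^c := {{i,j} : 1 ≤ i < j ≤ n} ∖ X and m := |X^c|. Let K ∈ {0,1}^{n×m} be the node-edge incidence matrix of X^c (the column for {i,j} ∈ X^c has 1's exactly in rows i and j), and let K̄ ∈ {−1,0,1}^{n×m} be a node-arc incidence matrix for any orientation of X^c (the column for {i,j} has a +1 in one of rows i, j and a −1 in the other, zeros elsewhere). Define B := [[0, 0, Kᵀ],[0, 0, K̄ᵀ],[K, K̄, A]] ∈ ℝ^{(2m+n)×(2m+n)}. Then the following are equivalent: (i) there exists a symmetric R ∈ ℝ^{n×n} that fits X such that A + R is positive semidefinite and rank(A + R) ≤ r; (ii) there exist u, v ∈ ℝ^m and d ∈ ℝⁿ such that B + Diag([u; v; d]) is positive semidefinite and rank(B + Diag([u; v; d])) ≤ 2m + r. -/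

import Mathlib

open Matrix

noncomputable section

/-- Unordered pairs `{i,j}` with `1 ≤ i < j ≤ n`, encoded as ordered pairs with
`i < j`. -/
abbrev PairIdx (n : ℕ) := {p : Fin n × Fin n // p.1 < p.2}

/-- The complement `X^c` of an edge set `X`, as an index type. -/
abbrev Xc (n : ℕ) (X : Finset (PairIdx n)) := {p : PairIdx n // p ∉ X}

/-- The off-diagonal block `W = [K K̄]` combining the node-edge incidence matrix `K`
and a node-arc incidence matrix `K̄` of `X^c`. -/
def Wblock (n : ℕ) (X : Finset (PairIdx n)) (K Kbar : Matrix (Fin n) (Xc n X) ℝ) :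
    Matrix (Fin n) (Xc n X ⊕ Xc n X) ℝ := fun i => Sum.elim (K i) (Kbar i)

/-- The matrix `B = [[0, 0, Kᵀ],[0, 0, K̄ᵀ],[K, K̄, A]]` of the reduction of `(P3)`
to `(P2)`. -/
def Bred (n : ℕ) (X : Finset (PairIdx n)) (A : Matrix (Fin n) (Fin n) ℝ)
    (K Kbar : Matrix (Fin n) (Xc n X) ℝ) :
    Matrix ((Xc n X ⊕ Xc n X) ⊕ Fin n) ((Xc n X ⊕ Xc n X) ⊕ Fin n) ℝ :=
  Matrix.fromBlocks 0 (Wblock n X K Kbar)ᵀ (Wblock n X K Kbar) A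


section Helpers

lemma range_prodMap' {R M M₂ N N₂ : Type*} [CommRing R] [AddCommGroup M] [AddCommGroup M₂]
    [AddCommGroup N] [AddCommGroup N₂] [Module R M] [Module R M₂] [Module R N] [Module R N₂]
    (f : M →ₗ[R] N) (g : M₂ →ₗ[R] N₂) :
    LinearMap.range (f.prodMap g) = (LinearMap.range f).prod (LinearMap.range g) := by
  ext ⟨a, b⟩
  simp only [LinearMap.mem_range, Submodule.mem_prod, LinearMap.prodMap_apply, Prod.ext_iff]
  constructor
  · rintro ⟨⟨x, y⟩, hx, hy⟩; exact ⟨⟨x, hx⟩, ⟨y, hy⟩⟩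
  · rintro ⟨⟨x, hx⟩, ⟨y, hy⟩⟩; exact ⟨(x, y), hx, hy⟩

/-- `p.prod q` is equivalent to `p × q`. -/
def prodSubEquiv {R M N : Type*} [CommRing R] [AddCommGroup M] [AddCommGroup N]
    [Module R M] [Module R N] (p : Submodule R M) (q : Submodule R N) :
    (p.prod q) ≃ₗ[R] p × q where
  toFun x := (⟨x.1.1, x.2.1⟩, ⟨x.1.2, x.2.2⟩)
  invFun y := ⟨(y.1.1, y.2.1), ⟨y.1.2, y.2.2⟩⟩
  left_inv _ := rfl
  right_inv _ := rfl
  map_add' _ _ := rfl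
  map_smul' _ _ := rfl

lemma finrank_prod_sub {M N : Type*} [AddCommGroup M] [AddCommGroup N]
    [Module ℝ M] [Module ℝ N] (p : Submodule ℝ M) (q : Submodule ℝ N)
    [Module.Finite ℝ p] [Module.Finite ℝ q] :
    Module.finrank ℝ (p.prod q) = Module.finrank ℝ p + Module.finrank ℝ q := by
  rw [(prodSubEquiv p q).finrank_eq, Module.finrank_prod]

lemma rank_fromBlocks_diag {m' n' : Type*} [Fintype m'] [Fintype n'] [DecidableEq m']
    [DecidableEq n'] (A : Matrix m' m' ℝ) (D : Matrix n' n' ℝ) :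
    (fromBlocks A 0 0 D).rank = A.rank + D.rank := by
  let e := LinearEquiv.sumArrowLequivProdArrow m' n' ℝ ℝ
  have hM : (fromBlocks A 0 0 D).mulVecLin =
      e.symm.toLinearMap ∘ₗ (A.mulVecLin.prodMap D.mulVecLin) ∘ₗ e.toLinearMap := by
    apply LinearMap.ext; intro x
    simp only [mulVecLin_apply, LinearMap.comp_apply, LinearEquiv.coe_coe,
      LinearMap.prodMap_apply, mulVecLin_apply]
    rw [fromBlocks_mulVec]
    ext s
    cases s <;> simp [e, LinearEquiv.sumArrowLequivProdArrow, Equiv.sumArrowEquivProdArrow,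
      Sum.elim]
  rw [Matrix.rank, hM, LinearMap.range_comp, LinearMap.range_comp_of_range_eq_top _ e.range,
    LinearEquiv.finrank_map_eq, range_prodMap', finrank_prod_sub]
  rfl

lemma psd_diag_nonneg {ι : Type*} [Fintype ι] [DecidableEq ι] {M : Matrix ι ι ℝ}
    (hM : M.PosSemidef) (p : ι) : 0 ≤ M p p := by
  have := hM.dotProduct_mulVec_nonneg (Pi.single p 1)
  simpa [dotProduct_single, mulVec_single] using this

lemma psd_diag_pos {ι : Type*} [Fintype ι] [DecidableEq ι] {M : Matrix ι ι ℝ}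
    (hM : M.PosSemidef) {p q : ι} (hpq : p ≠ q) (hne : M p q ≠ 0) : 0 < M p p := by
  rcases (psd_diag_nonneg hM p).lt_or_eq with h | h
  · exact h
  exfalso
  have hsym : M q p = M p q := by
    have := congrFun (congrFun hM.1 p) q
    simpa [conjTranspose_apply] using this
  set t : ℝ := -(M q q + 1) / (2 * M p q) with ht
  have hx := hM.dotProduct_mulVec_nonneg (Pi.single p t + Pi.single q 1)
  have hexp : star (Pi.single p t + Pi.single q (1:ℝ)) ⬝ᵥ
      (M *ᵥ (Pi.single p t + Pi.single q (1:ℝ))) =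
      t * t * M p p + t * M p q + t * M q p + M q q := by
    simp [mulVec_add, add_dotProduct, dotProduct_add, single_dotProduct, mulVec_single,
      hpq, hpq.symm, Pi.single_apply]
    ring
  rw [hexp, ← h, hsym] at hx
  have h2 : (2 * M p q) ≠ 0 := by positivity
  have : t * M p q + t * M p q = -(M q q + 1) := by
    rw [ht, div_mul_eq_mul_div, ← add_div, div_eq_iff h2]
    ring
  nlinarith [hx]

end Helpers

section Specific

variable {n : ℕ} {X : Finset (PairIdx n)} {K Kbar : Matrix (Fin n) (Xc n X) ℝ}

lemma K_ne (hK : ∀ (i : Fin n) (e : Xc n X),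
      K i e = if i = e.val.val.1 ∨ i = e.val.val.2 then 1 else 0)
    {i : Fin n} {e : Xc n X} (h : K i e ≠ 0) : i = e.val.val.1 ∨ i = e.val.val.2 := by
  by_contra hc
  push_neg at hc
  rw [hK i e] at h
  exact h (if_neg (not_or.mpr hc))

lemma Kbar_ne (hKbar : ∀ e : Xc n X,
      ((Kbar e.val.val.1 e = 1 ∧ Kbar e.val.val.2 e = -1) ∨
        (Kbar e.val.val.1 e = -1 ∧ Kbar e.val.val.2 e = 1)) ∧
      ∀ i : Fin n, i ≠ e.val.val.1 → i ≠ e.val.val.2 → Kbar i e = 0)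
    {i : Fin n} {e : Xc n X} (h : Kbar i e ≠ 0) : i = e.val.val.1 ∨ i = e.val.val.2 := by
  by_contra hc
  push_neg at hc
  exact h ((hKbar e).2 i hc.1 hc.2)

lemma match_pair {i j : Fin n} (hij : i ≠ j) {e : Xc n X}
    (h1 : i = e.val.val.1 ∨ i = e.val.val.2) (h2 : j = e.val.val.1 ∨ j = e.val.val.2) :
    e.val.val = (i, j) ∨ e.val.val = (j, i) := by
  rcases h1 with h1 | h1 <;> rcases h2 with h2 | h2
  · exact absurd (h1.trans h2.symm) hij
  · subst h1; subst h2; left; exact Prod.mk.eta.symm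
  · subst h1; subst h2; right; exact Prod.mk.eta.symm
  · exact absurd (h1.trans h2.symm) hij

lemma match_unique {i j : Fin n} {e e' : Xc n X}
    (h : e.val.val = (i, j) ∨ e.val.val = (j, i))
    (h' : e'.val.val = (i, j) ∨ e'.val.val = (j, i)) : e = e' := by
  have he := e.val.prop
  have he' := e'.val.prop
  apply Subtype.ext; apply Subtype.ext
  rcases h with h | h <;> rcases h' with h' | h'
  · rw [h, h']
  · rw [h] at he; rw [h'] at he'; exact absurd he' (lt_asymm he)
  · rw [h] at he; rw [h'] at he'; exact absurd he' (lt_asymm he)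
  · rw [h, h']

lemma K_match_val (hK : ∀ (i : Fin n) (e : Xc n X),
      K i e = if i = e.val.val.1 ∨ i = e.val.val.2 then 1 else 0)
    {i j : Fin n} {e : Xc n X}
    (hm : e.val.val = (i, j) ∨ e.val.val = (j, i)) : K i e * K j e = 1 := by
  rcases hm with h | h <;> simp [hK, h]

lemma Kbar_match_val (hKbar : ∀ e : Xc n X,
      ((Kbar e.val.val.1 e = 1 ∧ Kbar e.val.val.2 e = -1) ∨
        (Kbar e.val.val.1 e = -1 ∧ Kbar e.val.val.2 e = 1)) ∧
      ∀ i : Fin n, i ≠ e.val.val.1 → i ≠ e.val.val.2 → Kbar i e = 0)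
    {i j : Fin n} {e : Xc n X}
    (hm : e.val.val = (i, j) ∨ e.val.val = (j, i)) : Kbar i e * Kbar j e = -1 := by
  rcases hm with h | h <;>
    (rw [Prod.ext_iff] at h
     obtain ⟨h1, h2⟩ := h
     subst h1; subst h2) <;>
    rcases (hKbar e).1 with ⟨ha, hb⟩ | ⟨ha, hb⟩ <;> rw [ha, hb] <;> norm_num

lemma G_apply (K Kbar : Matrix (Fin n) (Xc n X) ℝ) (c : Xc n X ⊕ Xc n X → ℝ) (i j : Fin n) :
    (Wblock n X K Kbar * diagonal c * (Wblock n X K Kbar)ᵀ) i j =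
      (∑ e : Xc n X, K i e * c (Sum.inl e) * K j e) +
        ∑ e : Xc n X, Kbar i e * c (Sum.inr e) * Kbar j e := by
  rw [Matrix.mul_apply, Fintype.sum_sum_type]
  simp only [Matrix.mul_diagonal, Matrix.transpose_apply]
  simp [Wblock]

lemma G_nomatch (hK : ∀ (i : Fin n) (e : Xc n X),
      K i e = if i = e.val.val.1 ∨ i = e.val.val.2 then 1 else 0)
    (hKbar : ∀ e : Xc n X,
      ((Kbar e.val.val.1 e = 1 ∧ Kbar e.val.val.2 e = -1) ∨
        (Kbar e.val.val.1 e = -1 ∧ Kbar e.val.val.2 e = 1)) ∧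
      ∀ i : Fin n, i ≠ e.val.val.1 → i ≠ e.val.val.2 → Kbar i e = 0)
    (c : Xc n X ⊕ Xc n X → ℝ) {i j : Fin n} (hij : i ≠ j)
    (hno : ∀ e : Xc n X, ¬(e.val.val = (i, j) ∨ e.val.val = (j, i))) :
    (Wblock n X K Kbar * diagonal c * (Wblock n X K Kbar)ᵀ) i j = 0 := by
  have hz1 : ∀ e ∈ (Finset.univ : Finset (Xc n X)), K i e * c (Sum.inl e) * K j e = 0 := by
    intro e _
    by_cases h1 : K i e = 0; · simp [h1]
    by_cases h2 : K j e = 0; · simp [h2]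
    exact absurd (match_pair hij (K_ne hK h1) (K_ne hK h2)) (hno e)
  have hz2 : ∀ e ∈ (Finset.univ : Finset (Xc n X)),
      Kbar i e * c (Sum.inr e) * Kbar j e = 0 := by
    intro e _
    by_cases h1 : Kbar i e = 0; · simp [h1]
    by_cases h2 : Kbar j e = 0; · simp [h2]
    exact absurd (match_pair hij (Kbar_ne hKbar h1) (Kbar_ne hKbar h2)) (hno e)
  rw [G_apply, Finset.sum_eq_zero hz1, Finset.sum_eq_zero hz2, add_zero]

lemma G_match (hK : ∀ (i : Fin n) (e : Xc n X),
      K i e = if i = e.val.val.1 ∨ i = e.val.val.2 then 1 else 0)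
    (hKbar : ∀ e : Xc n X,
      ((Kbar e.val.val.1 e = 1 ∧ Kbar e.val.val.2 e = -1) ∨
        (Kbar e.val.val.1 e = -1 ∧ Kbar e.val.val.2 e = 1)) ∧
      ∀ i : Fin n, i ≠ e.val.val.1 → i ≠ e.val.val.2 → Kbar i e = 0)
    (c : Xc n X ⊕ Xc n X → ℝ) {i j : Fin n} (hij : i ≠ j) (e0 : Xc n X)
    (hm : e0.val.val = (i, j) ∨ e0.val.val = (j, i)) :
    (Wblock n X K Kbar * diagonal c * (Wblock n X K Kbar)ᵀ) i j =
      c (Sum.inl e0) - c (Sum.inr e0) := by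
  have h1 : ∑ e : Xc n X, K i e * c (Sum.inl e) * K j e = c (Sum.inl e0) := by
    rw [Finset.sum_eq_single_of_mem e0 (Finset.mem_univ _)]
    · have hval := K_match_val hK hm
      calc K i e0 * c (Sum.inl e0) * K j e0 = c (Sum.inl e0) * (K i e0 * K j e0) := by ring
        _ = c (Sum.inl e0) := by rw [hval, mul_one]
    · intro e _ hne
      by_cases h1 : K i e = 0; · simp [h1]
      by_cases h2 : K j e = 0; · simp [h2]
      exact absurd (match_unique (match_pair hij (K_ne hK h1) (K_ne hK h2)) hm) hne
  have h2 : ∑ e : Xc n X, Kbar i e * c (Sum.inr e) * Kbar j e = -c (Sum.inr e0) := by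
    rw [Finset.sum_eq_single_of_mem e0 (Finset.mem_univ _)]
    · have hval := Kbar_match_val hKbar hm
      calc Kbar i e0 * c (Sum.inr e0) * Kbar j e0
          = c (Sum.inr e0) * (Kbar i e0 * Kbar j e0) := by ring
        _ = -c (Sum.inr e0) := by rw [hval]; ring
    · intro e _ hne
      by_cases h1 : Kbar i e = 0; · simp [h1]
      by_cases h2 : Kbar j e = 0; · simp [h2]
      exact absurd (match_unique (match_pair hij (Kbar_ne hKbar h1) (Kbar_ne hKbar h2)) hm) hne
  rw [G_apply, h1, h2, sub_eq_add_neg]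

lemma schur_key (A : Matrix (Fin n) (Fin n) ℝ) (K Kbar : Matrix (Fin n) (Xc n X) ℝ)
    (u v : Xc n X → ℝ) (d : Fin n → ℝ) (hu : ∀ e, 0 < u e) (hv : ∀ e, 0 < v e) :
    ((Bred n X A K Kbar + diagonal (Sum.elim (Sum.elim u v) d)).PosSemidef ↔
      (A + diagonal d - Wblock n X K Kbar * (diagonal (Sum.elim u v))⁻¹ *
        (Wblock n X K Kbar)ᵀ).PosSemidef) ∧
    (Bred n X A K Kbar + diagonal (Sum.elim (Sum.elim u v) d)).rank =
      2 * Fintype.card (Xc n X) +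
      (A + diagonal d - Wblock n X K Kbar * (diagonal (Sum.elim u v))⁻¹ *
        (Wblock n X K Kbar)ᵀ).rank := by
  set W := Wblock n X K Kbar with hWdef
  set T : Matrix (Xc n X ⊕ Xc n X) (Xc n X ⊕ Xc n X) ℝ := diagonal (Sum.elim u v) with hT
  have hTpos : T.PosDef := by
    rw [hT]
    refine posDef_diagonal_iff.mpr ?_
    rintro (e | e)
    · simpa using hu e
    · simpa using hv e
  have hdet : IsUnit T.det := isUnit_iff_ne_zero.mpr (ne_of_gt hTpos.det_pos)
  haveI : Invertible T := T.invertibleOfIsUnitDet hdet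
  have hWH : (Wᵀ)ᴴ = W := by
    ext i j; simp [conjTranspose_apply]
  have hMeq : Bred n X A K Kbar + diagonal (Sum.elim (Sum.elim u v) d) =
      fromBlocks T Wᵀ W (A + diagonal d) := by
    rw [Bred, ← Matrix.fromBlocks_diagonal (Sum.elim u v) d, Matrix.fromBlocks_add]
    simp [hWdef]
    exact hT.symm
  constructor
  · rw [hMeq]
    have hps := Matrix.PosDef.fromBlocks₁₁ (A := T) Wᵀ (A + diagonal d) hTpos
    rw [hWH] at hps
    exact hps
  · rw [hMeq, fromBlocks_eq_of_invertible₁₁ T Wᵀ W (A + diagonal d)]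
    have hL : IsUnit (fromBlocks (1 : Matrix (Xc n X ⊕ Xc n X) (Xc n X ⊕ Xc n X) ℝ) 0
        (W * ⅟T) (1 : Matrix (Fin n) (Fin n) ℝ)).det := by
      rw [Matrix.det_fromBlocks_zero₁₂]; simp
    have hU : IsUnit (fromBlocks (1 : Matrix (Xc n X ⊕ Xc n X) (Xc n X ⊕ Xc n X) ℝ)
        (⅟T * Wᵀ) 0 (1 : Matrix (Fin n) (Fin n) ℝ)).det := by
      rw [Matrix.det_fromBlocks_zero₂₁]; simp
    rw [Matrix.mul_assoc, Matrix.rank_mul_eq_right_of_isUnit_det _ _ hL,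
      Matrix.rank_mul_eq_left_of_isUnit_det _ _ hU, rank_fromBlocks_diag,
      Matrix.rank_of_isUnit T ((isUnit_iff_isUnit_det T).mpr hdet), Fintype.card_sum,
      invOf_eq_nonsing_inv, two_mul]

end Specific

/-- Reduction of `(P3)` to `(P2)`: with `K` the node-edge incidence
matrix of `X^c` and `K̄` a node-arc incidence matrix for any orientation of `X^c`,
the problem `(P3)` for `(A, X, r)` is feasible iff the problem `(P2)` for
`(B, 2m + r)` is feasible. -/
theorem stmt14 (n : ℕ) (A : Matrix (Fin n) (Fin n) ℝ) (hA : A.IsSymm)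
    (X : Finset (PairIdx n)) (r : ℕ) (hr1 : 1 ≤ r) (hr2 : r ≤ n)
    (K Kbar : Matrix (Fin n) (Xc n X) ℝ)
    (hK : ∀ (i : Fin n) (e : Xc n X),
      K i e = if i = e.val.val.1 ∨ i = e.val.val.2 then 1 else 0)
    (hKbar : ∀ e : Xc n X,
      ((Kbar e.val.val.1 e = 1 ∧ Kbar e.val.val.2 e = -1) ∨
        (Kbar e.val.val.1 e = -1 ∧ Kbar e.val.val.2 e = 1)) ∧
      ∀ i : Fin n, i ≠ e.val.val.1 → i ≠ e.val.val.2 → Kbar i e = 0) :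
    (∃ R : Matrix (Fin n) (Fin n) ℝ, R.IsSymm ∧ (∀ p ∈ X, R p.val.1 p.val.2 = 0) ∧
        (A + R).PosSemidef ∧ (A + R).rank ≤ r) ↔
    (∃ (u v : Xc n X → ℝ) (d : Fin n → ℝ),
        (Bred n X A K Kbar + Matrix.diagonal (Sum.elim (Sum.elim u v) d)).PosSemidef ∧
        (Bred n X A K Kbar + Matrix.diagonal (Sum.elim (Sum.elim u v) d)).rank ≤
          2 * Fintype.card (Xc n X) + r) := by
  constructor
  · rintro ⟨R, hRsymm, hRfit, hpsd, hrank⟩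
    set W := Wblock n X K Kbar with hWdef
    set cu : Xc n X → ℝ := fun e => max (-(R e.val.val.1 e.val.val.2)) 0 + 1 with hcu
    set cv : Xc n X → ℝ := fun e => max (R e.val.val.1 e.val.val.2) 0 + 1 with hcv
    have hcu0 : ∀ e, 0 < cu e := fun e => by
      rw [hcu]; positivity
    have hcv0 : ∀ e, 0 < cv e := fun e => by
      rw [hcv]; positivity
    set u : Xc n X → ℝ := fun e => (cu e)⁻¹ with hu_def
    set v : Xc n X → ℝ := fun e => (cv e)⁻¹ with hv_def
    have hu : ∀ e, 0 < u e := fun e => by rw [hu_def]; exact inv_pos.mpr (hcu0 e)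
    have hv : ∀ e, 0 < v e := fun e => by rw [hv_def]; exact inv_pos.mpr (hcv0 e)
    set c : Xc n X ⊕ Xc n X → ℝ := Sum.elim cu cv with hc
    set d : Fin n → ℝ := fun i => R i i + (W * diagonal c * Wᵀ) i i with hd
    have hTinv : (diagonal (Sum.elim u v))⁻¹ = diagonal c := by
      apply inv_eq_right_inv
      have hfun : ∀ s, (Sum.elim u v) s * c s = 1 := by
        intro s
        rcases s with e | e <;>
          simp only [Pi.mul_apply, Sum.elim_inl, Sum.elim_inr, Pi.one_apply, hu_def, hv_def, hc]
        · exact inv_mul_cancel₀ (ne_of_gt (hcu0 e))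
        · exact inv_mul_cancel₀ (ne_of_gt (hcv0 e))
      rw [diagonal_mul_diagonal,
        show (fun i => Sum.elim u v i * c i) = fun _ => (1:ℝ) from funext hfun, diagonal_one]
    have hkey : A + diagonal d - W * (diagonal (Sum.elim u v))⁻¹ * Wᵀ = A + R := by
      rw [hTinv]
      ext i j
      by_cases hij : i = j
      · subst hij
        simp only [Matrix.add_apply, Matrix.sub_apply, diagonal_apply_eq, hd]
        ring
      · simp only [Matrix.add_apply, Matrix.sub_apply, diagonal_apply_ne _ hij]
        by_cases hex : ∃ e : Xc n X, e.val.val = (i, j) ∨ e.val.val = (j, i)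
        · obtain ⟨e0, hm⟩ := hex
          have hRval : R i j = R e0.val.val.1 e0.val.val.2 := by
            rcases hm with h | h <;> (rw [Prod.ext_iff] at h; obtain ⟨h1, h2⟩ := h)
            · rw [h1, h2]
            · rw [h1, h2]; exact hRsymm.apply j i
          have hcval : c (Sum.inl e0) - c (Sum.inr e0) = -(R e0.val.val.1 e0.val.val.2) := by
            simp only [hc, Sum.elim_inl, Sum.elim_inr, hcu, hcv]
            rcases le_total (R e0.val.val.1 e0.val.val.2) 0 with h | h
            · rw [max_eq_left (neg_nonneg.mpr h), max_eq_right h]; ring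
            · rw [max_eq_right (neg_nonpos.mpr h), max_eq_left h]; ring
          rw [G_match hK hKbar c hij e0 hm, hcval, hRval]
          ring
        · have hRij : R i j = 0 := by
            rcases lt_trichotomy i j with hlt | heq | hgt
            · have hq : (⟨(i, j), hlt⟩ : PairIdx n) ∈ X := by
                by_contra hqn
                exact hex ⟨⟨⟨(i, j), hlt⟩, hqn⟩, Or.inl rfl⟩
              exact hRfit _ hq
            · exact absurd heq hij
            · have hq : (⟨(j, i), hgt⟩ : PairIdx n) ∈ X := by
                by_contra hqn
                exact hex ⟨⟨⟨(j, i), hgt⟩, hqn⟩, Or.inr rfl⟩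
              have h0 : R j i = 0 := hRfit _ hq
              rw [hRsymm.apply j i]
              exact h0
          rw [G_nomatch hK hKbar c hij (fun e h => hex ⟨e, h⟩), hRij]
          ring
    obtain ⟨hiff, hrk⟩ := schur_key A K Kbar u v d hu hv
    refine ⟨u, v, d, ?_, ?_⟩
    · rw [hiff, ← hWdef, hkey]
      exact hpsd
    · rw [hrk, ← hWdef, hkey]
      exact Nat.add_le_add_left hrank _
  · rintro ⟨u, v, d, hpsd, hrank⟩
    set W := Wblock n X K Kbar with hWdef
    have hu : ∀ e, 0 < u e := by
      intro e
      have h2 : (Bred n X A K Kbar + diagonal (Sum.elim (Sum.elim u v) d))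
          (Sum.inl (Sum.inl e)) (Sum.inr e.val.val.1) = 1 := by
        simp [Bred, Matrix.add_apply, Wblock, hK]
      have hpos := psd_diag_pos hpsd (p := Sum.inl (Sum.inl e)) (q := Sum.inr e.val.val.1)
        (by simp) (by rw [h2]; exact one_ne_zero)
      have h1 : (Bred n X A K Kbar + diagonal (Sum.elim (Sum.elim u v) d))
          (Sum.inl (Sum.inl e)) (Sum.inl (Sum.inl e)) = u e := by
        simp [Bred, Matrix.add_apply]
      rwa [h1] at hpos
    have hv : ∀ e, 0 < v e := by
      intro e
      have hne : Kbar e.val.val.1 e ≠ 0 := by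
        rcases (hKbar e).1 with ⟨ha, _⟩ | ⟨ha, _⟩ <;> rw [ha] <;> norm_num
      have h2 : (Bred n X A K Kbar + diagonal (Sum.elim (Sum.elim u v) d))
          (Sum.inl (Sum.inr e)) (Sum.inr e.val.val.1) = Kbar e.val.val.1 e := by
        simp [Bred, Matrix.add_apply, Wblock]
      have hpos := psd_diag_pos hpsd (p := Sum.inl (Sum.inr e)) (q := Sum.inr e.val.val.1)
        (by simp) (by rw [h2]; exact hne)
      have h1 : (Bred n X A K Kbar + diagonal (Sum.elim (Sum.elim u v) d))
          (Sum.inl (Sum.inr e)) (Sum.inl (Sum.inr e)) = v e := by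
        simp [Bred, Matrix.add_apply]
      rwa [h1] at hpos
    obtain ⟨hiff, hrk⟩ := schur_key A K Kbar u v d hu hv
    have hTinv : (diagonal (Sum.elim u v))⁻¹ =
        diagonal (fun s => (Sum.elim u v s)⁻¹) := by
      apply inv_eq_right_inv
      have hfun : ∀ s, (Sum.elim u v) s * ((Sum.elim u v) s)⁻¹ = 1 := by
        intro s
        rcases s with e | e <;>
          simp only [Pi.mul_apply, Sum.elim_inl, Sum.elim_inr, Pi.one_apply]
        · exact mul_inv_cancel₀ (ne_of_gt (hu e))
        · exact mul_inv_cancel₀ (ne_of_gt (hv e))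
      rw [diagonal_mul_diagonal,
        show (fun i => Sum.elim u v i * ((Sum.elim u v) i)⁻¹) = fun _ => (1:ℝ) from
          funext hfun, diagonal_one]
    set R : Matrix (Fin n) (Fin n) ℝ :=
      diagonal d - W * (diagonal (Sum.elim u v))⁻¹ * Wᵀ with hR
    have hAR : A + diagonal d - W * (diagonal (Sum.elim u v))⁻¹ * Wᵀ = A + R := by
      rw [hR, add_sub_assoc]
    refine ⟨R, ?_, ?_, ?_, ?_⟩
    · rw [Matrix.IsSymm, hR, hTinv, transpose_sub, diagonal_transpose, transpose_mul,
        transpose_mul, transpose_transpose, diagonal_transpose, Matrix.mul_assoc]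
    · intro p hp
      have hno : ∀ e : Xc n X, ¬(e.val.val = (p.val.1, p.val.2) ∨
          e.val.val = (p.val.2, p.val.1)) := by
        rintro e (h | h)
        · have : e.val = p := by
            apply Subtype.ext
            rw [h]
          exact e.prop (this ▸ hp)
        · have := e.val.prop
          rw [h] at this
          exact absurd p.prop (lt_asymm this)
      rw [hR, Matrix.sub_apply, diagonal_apply_ne _ (ne_of_lt p.prop), hTinv,
        G_nomatch hK hKbar _ (ne_of_lt p.prop) hno]
      ring
    · rw [← hAR]
      exact hiff.mp hpsd
    · rw [hAR] at hrk
      omega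

end
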